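/- Let X_1, ..., X_n be (mutually) independent real-valued random variables on a probability space (Ω, F, P). Then E[|X_1 + ... + X_n| ∧ 1] ≤ ( Σ_{k=1}^n E[τ(X_k)²] + ( Σ_{k=1}^n E[τ(X_k)] )² )^{1/2} + Σ_{k=1}^n E[τ(X_k)²]. -/

import Mathlib

open MeasureTheory ProbabilityTheory

/-- The truncation function `τ(α) = α` if `|α| ≤ 1` and `τ(α) = α/|α|` otherwise. -/
noncomputable def tau (α : ℝ) : ℝ := if |α| ≤ 1 then α else α / |α|

lemma tau_measurable : Measurable tau := by
  unfold tau
  exact Measurable.ite (measurableSet_le (measurable_id.abs) measurable_const)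
    measurable_id (measurable_id.div measurable_id.abs)

lemma abs_tau_le_one (α : ℝ) : |tau α| ≤ 1 := by
  unfold tau
  split_ifs with h
  · exact h
  · rw [abs_div, abs_abs, div_le_one (lt_trans one_pos (not_le.1 h))]

lemma tau_sq_eq_one {α : ℝ} (h : ¬ |α| ≤ 1) : (tau α) ^ 2 = 1 := by
  have hgt : 1 < |α| := not_le.1 h
  have hα : α ≠ 0 := abs_pos.1 (by linarith)
  simp only [tau, if_neg h, div_pow, sq_abs]
  field_simp

lemma pointwise_bound (n : ℕ) (x : Fin n → ℝ) :
    min |∑ k, x k| 1 ≤ |∑ k, tau (x k)| + ∑ k, (tau (x k)) ^ 2 := by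
  by_cases h : ∀ k, |x k| ≤ 1
  · have : ∑ k, tau (x k) = ∑ k, x k := by
      refine Finset.sum_congr rfl fun k _ => ?_
      simp [tau, h k]
    rw [this]
    have h2 : (0:ℝ) ≤ ∑ k, (tau (x k)) ^ 2 :=
      Finset.sum_nonneg fun k _ => sq_nonneg _
    calc min |∑ k, x k| 1 ≤ |∑ k, x k| := min_le_left _ _
    _ ≤ _ := le_add_of_nonneg_right h2
  · push_neg at h
    obtain ⟨k₀, hk₀⟩ := h
    have h1 : (1:ℝ) ≤ ∑ k, (tau (x k)) ^ 2 := by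
      have := tau_sq_eq_one (not_le.2 hk₀)
      calc (1:ℝ) = (tau (x k₀))^2 := this.symm
      _ ≤ _ := Finset.single_le_sum (f := fun k => (tau (x k)) ^ 2)
          (fun k _ => sq_nonneg _) (Finset.mem_univ k₀)
    calc min |∑ k, x k| 1 ≤ 1 := min_le_right _ _
    _ ≤ _ := le_add_of_nonneg_left (abs_nonneg _) |>.trans (by linarith)

/-- Lemma 3.9: for independent real random variables `X_1, …, X_n`,
`E[|Σ X_k| ∧ 1] ≤ (Σ E[τ(X_k)²] + (Σ E[τ(X_k)])²)^{1/2} + Σ E[τ(X_k)²]`. -/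
theorem integral_min_abs_sum_one_le
    {Ω : Type*} [MeasurableSpace Ω] (P : Measure Ω) [IsProbabilityMeasure P]
    (n : ℕ) (X : Fin n → Ω → ℝ) (hX : ∀ k, Measurable (X k))
    (hindep : iIndepFun X P) :
    ∫ ω, min |∑ k, X k ω| 1 ∂P
      ≤ Real.sqrt ((∑ k, ∫ ω, (tau (X k ω)) ^ 2 ∂P)
          + (∑ k, ∫ ω, tau (X k ω) ∂P) ^ 2)
        + ∑ k, ∫ ω, (tau (X k ω)) ^ 2 ∂P := by
  set T : Fin n → Ω → ℝ := fun k ω => tau (X k ω) with hT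
  have hTmeas : ∀ k, Measurable (T k) := fun k => tau_measurable.comp (hX k)
  have hTmem2 : ∀ k, MemLp (T k) 2 P := fun k => by
    refine (memLp_top_of_bound (hTmeas k).aestronglyMeasurable 1
      (Filter.Eventually.of_forall fun ω => ?_)).mono_exponent le_top
    simpa using abs_tau_le_one (X k ω)
  set Y : Ω → ℝ := fun ω => ∑ k, T k ω with hY
  have hYmeas : Measurable Y := by
    apply Finset.measurable_sum _ (fun k _ => hTmeas k)
  have hYmem2 : MemLp Y 2 P := by
    have : Y = ∑ k ∈ Finset.univ, T k := by ext ω; simp [hY, Finset.sum_apply]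
    rw [this]; exact memLp_finsetSum' _ (fun k _ => hTmem2 k)
  have hYint : Integrable Y P := hYmem2.integrable (by norm_num)
  have hTint : ∀ k, Integrable (T k) P := fun k => (hTmem2 k).integrable (by norm_num)
  have hTsqint : ∀ k, Integrable (fun ω => (T k ω) ^ 2) P := fun k => by
    simpa [sq] using (hTmem2 k).integrable_sq
  -- Step 1: pointwise bound and monotone integral
  have step1 : ∫ ω, min |∑ k, X k ω| 1 ∂P
      ≤ ∫ ω, |Y ω| ∂P + ∑ k, ∫ ω, (T k ω) ^ 2 ∂P := by
    have hmin_int : Integrable (fun ω => min |∑ k, X k ω| 1) P := by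
      refine (memLp_top_of_bound ?_ 1
        (Filter.Eventually.of_forall fun ω => ?_)).integrable le_top
      · exact (((Finset.measurable_sum _ (fun k _ => hX k)).abs.min
          measurable_const)).aestronglyMeasurable
      · rw [Real.norm_eq_abs, abs_le]
        have h0 : (0:ℝ) ≤ min |∑ k, X k ω| 1 :=
          le_min (abs_nonneg _) zero_le_one
        exact ⟨by linarith, min_le_right _ _⟩
    have hrhs_int : Integrable (fun ω => |Y ω| + ∑ k, (T k ω) ^ 2) P :=
      hYint.abs.add (integrable_finset_sum _ (fun k _ => hTsqint k))
    calc ∫ ω, min |∑ k, X k ω| 1 ∂P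
        ≤ ∫ ω, (|Y ω| + ∑ k, (T k ω) ^ 2) ∂P := by
          refine integral_mono hmin_int hrhs_int fun ω => ?_
          simpa [hY, hT] using pointwise_bound n (fun k => X k ω)
      _ = ∫ ω, |Y ω| ∂P + ∑ k, ∫ ω, (T k ω) ^ 2 ∂P := by
          rw [integral_add hYint.abs (integrable_finset_sum _ (fun k _ => hTsqint k)),
            integral_finset_sum _ (fun k _ => hTsqint k)]
  -- Step 2: Cauchy-Schwarz: E|Y| ≤ sqrt(E Y²)
  have habs_sq : ∀ ω, |Y ω| ^ 2 = Y ω ^ 2 := fun ω => sq_abs _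
  have hYabs2 : MemLp (fun ω => |Y ω|) 2 P := hYmem2.abs
  have cs : ∫ ω, |Y ω| ∂P ≤ Real.sqrt (∫ ω, (Y ω) ^ 2 ∂P) := by
    have hv := variance_nonneg (fun ω => |Y ω|) P
    rw [variance_eq_sub hYabs2] at hv
    simp only [Pi.pow_apply] at hv
    simp_rw [habs_sq] at hv
    have h1 : (∫ ω, |Y ω| ∂P) ^ 2 ≤ ∫ ω, (Y ω) ^ 2 ∂P := by linarith
    have h0 : 0 ≤ ∫ ω, |Y ω| ∂P := integral_nonneg fun ω => abs_nonneg _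
    exact (Real.le_sqrt h0 (integral_nonneg fun ω => sq_nonneg _)).2 h1
  -- Step 3: E Y² = Var Y + (E Y)² and Var Y = Σ Var T_k ≤ Σ E T_k²
  have hvar : variance Y P = ∑ k, variance (T k) P := by
    have hYsum : Y = ∑ k ∈ Finset.univ, T k := by ext ω; simp [hY, Finset.sum_apply]
    rw [hYsum]
    refine IndepFun.variance_sum (fun k _ => hTmem2 k) ?_
    intro i _ j _ hij
    exact (hindep.comp (fun _ => tau) (fun _ => tau_measurable)).indepFun hij
  have hEY2 : ∫ ω, (Y ω) ^ 2 ∂P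
      ≤ (∑ k, ∫ ω, (T k ω) ^ 2 ∂P) + (∑ k, ∫ ω, T k ω ∂P) ^ 2 := by
    have hdef := variance_eq_sub hYmem2
    simp only [Pi.pow_apply] at hdef
    have hEY : ∫ ω, Y ω ∂P = ∑ k, ∫ ω, T k ω ∂P := by
      rw [hY]
      exact integral_finset_sum _ (fun k _ => hTint k)
    have hvle : ∑ k, variance (T k) P ≤ ∑ k, ∫ ω, (T k ω) ^ 2 ∂P :=
      Finset.sum_le_sum fun k _ => variance_le_expectation_sq (hTmem2 k).aestronglyMeasurable
    have : ∫ ω, (Y ω) ^ 2 ∂P = variance Y P + (∫ ω, Y ω ∂P) ^ 2 := by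
      rw [hdef]; ring
    rw [this, hvar, hEY]
    linarith
  calc ∫ ω, min |∑ k, X k ω| 1 ∂P
      ≤ ∫ ω, |Y ω| ∂P + ∑ k, ∫ ω, (T k ω) ^ 2 ∂P := step1
    _ ≤ Real.sqrt (∫ ω, (Y ω) ^ 2 ∂P) + ∑ k, ∫ ω, (T k ω) ^ 2 ∂P := by linarith
    _ ≤ _ := add_le_add (Real.sqrt_le_sqrt hEY2) le_rfl
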